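/- arXiv:1905.00113 — 4 statements merged into one kernel-verified Lean document; each statement's English description precedes it below -/
import Mathlib

section
/- If Φ = (φₙ) is a frame for a separable Hilbert space H with lower frame bound m_Φ, and Ψ = (ψₙ) is a Bessel sequence in H whose synthesis operator T_Ψ satisfies ‖T_Φ − T_Ψ‖ ≤ μ for some μ < √m_Φ, then Ψ is a frame for H with lower frame bound (√m_Φ − μ)² and upper frame bound (√M_Φ + μ)². -/
open ContinuousLinearMap MeasureTheory
open scoped InnerProductSpace ComplexConjugate

noncomputable section

notation "ℓ²" => lp (fun _ : ℕ => ℂ) 2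

variable {H : Type} [NormedAddCommGroup H] [InnerProductSpace ℂ H] [CompleteSpace H]

/-- `Φ = (φₙ)` is a frame for `H` with lower bound `m` and upper bound `M`. -/
def IsFrame (φ : ℕ → H) (m M : ℝ) : Prop :=
  0 < m ∧ 0 < M ∧ ∀ f : H,
    m * ‖f‖ ^ 2 ≤ ∑' n, ‖(inner ℂ (φ n) f : ℂ)‖ ^ 2 ∧
    ∑' n, ‖(inner ℂ (φ n) f : ℂ)‖ ^ 2 ≤ M * ‖f‖ ^ 2

/-- `Φ = (φₙ)` is a Bessel sequence with bound `M`. -/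
def IsBessel (φ : ℕ → H) (M : ℝ) : Prop :=
  0 < M ∧ ∀ f : H, ∑' n, ‖(inner ℂ (φ n) f : ℂ)‖ ^ 2 ≤ M * ‖f‖ ^ 2

/-- `U` is the analysis operator of the sequence `Φ = (φₙ)`, i.e. `U f = (⟨f, φₙ⟩)ₙ`. -/
def IsAnalysis (φ : ℕ → H) (U : H →L[ℂ] ℓ²) : Prop :=
  ∀ (f : H) (n : ℕ), U f n = (inner ℂ (φ n) f : ℂ)

/-- Orthogonal projection onto a closed submodule, as an endomorphism. -/
def orthProj {E : Type} [NormedAddCommGroup E] [InnerProductSpace ℂ E] [CompleteSpace E]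
    (K : Submodule ℂ E) (hK : IsClosed (K : Set E)) : E →L[ℂ] E :=
  haveI := hK.completeSpace_coe
  K.subtypeL.comp K.orthogonalProjectionOnto

/-- Orthogonal projection onto a closed submodule, with values in the submodule. -/
def orthProjTo {E : Type} [NormedAddCommGroup E] [InnerProductSpace ℂ E] [CompleteSpace E]
    (K : Submodule ℂ E) (hK : IsClosed (K : Set E)) : E →L[ℂ] K :=
  haveI := hK.completeSpace_coe
  K.orthogonalProjectionOnto

/-- The gap `δ(X, Y) = ‖(Id - P_Y)|_X‖` from `X` to a closed subspace `Y`. -/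
def gap {E : Type} [NormedAddCommGroup E] [InnerProductSpace ℂ E] [CompleteSpace E]
    (X Y : Submodule ℂ E) (hY : IsClosed (Y : Set E)) : ℝ :=
  ‖(ContinuousLinearMap.id ℂ E - orthProj Y hY).comp X.subtypeL‖


lemma tsum_eq_norm_sq {H : Type} [NormedAddCommGroup H] [InnerProductSpace ℂ H]
    [CompleteSpace H] (χ : ℕ → H) (U : H →L[ℂ] ℓ²) (hU : IsAnalysis χ U) (f : H) :
    ∑' n, ‖(inner ℂ (χ n) f : ℂ)‖ ^ 2 = ‖U f‖ ^ 2 := by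
  have h := lp.norm_rpow_eq_tsum (p := 2) (by norm_num) (U f)
  simp only [ENNReal.toReal_ofNat] at h
  rw [show ((2:ℝ)) = ((2:ℕ):ℝ) by norm_num] at h
  simp only [Real.rpow_natCast] at h
  rw [h]
  exact tsum_congr fun n => by rw [hU f n]

theorem stmt0
    (φ ψ : ℕ → H) (mΦ MΦ MΨ μ : ℝ)
    (UΦ UΨ : H →L[ℂ] ℓ²) (TΦ TΨ : ℓ² →L[ℂ] H)
    (hUΦ : IsAnalysis φ UΦ) (hUΨ : IsAnalysis ψ UΨ)
    (hTΦ : TΦ = adjoint UΦ) (hTΨ : TΨ = adjoint UΨ)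
    (hΦ : IsFrame φ mΦ MΦ) (hΨ : IsBessel ψ MΨ)
    (hμ : μ < Real.sqrt mΦ) (hper : ‖TΦ - TΨ‖ ≤ μ) :
    IsFrame ψ ((Real.sqrt mΦ - μ) ^ 2) ((Real.sqrt MΦ + μ) ^ 2) := by
  have hμ0 : 0 ≤ μ := le_trans (norm_nonneg _) hper
  have hmΦ : 0 < mΦ := hΦ.1
  have hMΦ : 0 < MΦ := hΦ.2.1
  have hsm : 0 < Real.sqrt mΦ := Real.sqrt_pos.mpr hmΦ
  have hsM : 0 < Real.sqrt MΦ := Real.sqrt_pos.mpr hMΦ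
  have hUnorm : ‖UΦ - UΨ‖ ≤ μ := by
    have : TΦ - TΨ = adjoint (UΦ - UΨ) := by rw [hTΦ, hTΨ, map_sub]
    rw [this] at hper
    rwa [adjoint.norm_map] at hper
  have hpos : 0 < Real.sqrt mΦ - μ := by linarith
  refine ⟨pow_pos hpos 2, by positivity, fun f => ?_⟩
  rw [tsum_eq_norm_sq ψ UΨ hUΨ f]
  have hΦf := (hΦ.2.2 f)
  rw [tsum_eq_norm_sq φ UΦ hUΦ f] at hΦf
  have hdiff : ‖UΦ f - UΨ f‖ ≤ μ * ‖f‖ := by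
    calc ‖UΦ f - UΨ f‖ = ‖(UΦ - UΨ) f‖ := by simp
      _ ≤ ‖UΦ - UΨ‖ * ‖f‖ := le_opNorm _ _
      _ ≤ μ * ‖f‖ := by gcongr
  have hlo : Real.sqrt mΦ * ‖f‖ ≤ ‖UΦ f‖ := by
    have : Real.sqrt (mΦ * ‖f‖ ^ 2) ≤ Real.sqrt (‖UΦ f‖ ^ 2) := Real.sqrt_le_sqrt hΦf.1
    rwa [Real.sqrt_mul hmΦ.le, Real.sqrt_sq (norm_nonneg _), Real.sqrt_sq_eq_abs,
      abs_of_nonneg (by positivity)] at this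
  have hhi : ‖UΦ f‖ ≤ Real.sqrt MΦ * ‖f‖ := by
    have : Real.sqrt (‖UΦ f‖ ^ 2) ≤ Real.sqrt (MΦ * ‖f‖ ^ 2) := Real.sqrt_le_sqrt hΦf.2
    rwa [Real.sqrt_mul hMΦ.le, Real.sqrt_sq (norm_nonneg _), Real.sqrt_sq_eq_abs,
      abs_of_nonneg (by positivity)] at this
  have htri := norm_sub_norm_le (UΦ f) (UΨ f)
  constructor
  · have key : (Real.sqrt mΦ - μ) * ‖f‖ ≤ ‖UΨ f‖ := by
      rw [sub_mul]; linarith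
    calc (Real.sqrt mΦ - μ) ^ 2 * ‖f‖ ^ 2 = ((Real.sqrt mΦ - μ) * ‖f‖) ^ 2 := by ring
      _ ≤ ‖UΨ f‖ ^ 2 := by
          apply pow_le_pow_left₀ (by positivity) key
  · have key : ‖UΨ f‖ ≤ (Real.sqrt MΦ + μ) * ‖f‖ := by
      have h2 := norm_le_norm_add_norm_sub' (UΨ f) (UΦ f)
      have h3 : ‖UΨ f - UΦ f‖ = ‖UΦ f - UΨ f‖ := norm_sub_rev _ _
      rw [add_mul]; linarith
    calc ‖UΨ f‖ ^ 2 ≤ ((Real.sqrt MΦ + μ) * ‖f‖) ^ 2 :=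
          pow_le_pow_left₀ (norm_nonneg _) key 2
      _ = (Real.sqrt MΦ + μ) ^ 2 * ‖f‖ ^ 2 := by ring
end
end

section
/- Let Φ be a frame for H with lower bound m_Φ and let Ψ be a Bessel sequence in H. Then the gap δ(R(U_Φ), closure of R(U_Ψ)) from the range of the analysis operator of Φ to the closure of the range of the analysis operator of Ψ satisfies δ(R(U_Φ), cl R(U_Ψ)) ≤ ‖T_Φ − T_Ψ‖ / √m_Φ. -/
open ContinuousLinearMap MeasureTheory
open scoped InnerProductSpace ComplexConjugate

noncomputable section

variable {H : Type} [NormedAddCommGroup H] [InnerProductSpace ℂ H] [CompleteSpace H]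

theorem stmt1
    (φ ψ : ℕ → H) (mΦ MΦ MΨ : ℝ)
    (UΦ UΨ : H →L[ℂ] ℓ²) (TΦ TΨ : ℓ² →L[ℂ] H)
    (hUΦ : IsAnalysis φ UΦ) (hUΨ : IsAnalysis ψ UΨ)
    (hTΦ : TΦ = adjoint UΦ) (hTΨ : TΨ = adjoint UΨ)
    (hΦ : IsFrame φ mΦ MΦ) (hΨ : IsBessel ψ MΨ) :
    gap (LinearMap.range (UΦ : H →ₗ[ℂ] ℓ²)) ((LinearMap.range (UΨ : H →ₗ[ℂ] ℓ²)).topologicalClosure)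
        (Submodule.isClosed_topologicalClosure _)
      ≤ ‖TΦ - TΨ‖ / Real.sqrt mΦ := by
  obtain ⟨hm, hM, hfr⟩ := hΦ
  set K := (LinearMap.range (UΨ : H →ₗ[ℂ] ℓ²)).topologicalClosure with hKdef
  have hK : IsClosed (K : Set ℓ²) := Submodule.isClosed_topologicalClosure _
  haveI := hK.completeSpace_coe
  have hTnorm : ‖TΦ - TΨ‖ = ‖UΦ - UΨ‖ := by
    rw [hTΦ, hTΨ, ← map_sub (adjoint : (H →L[ℂ] ℓ²) ≃ₗᵢ⋆[ℂ] _) UΦ UΨ]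
    exact (adjoint : (H →L[ℂ] ℓ²) ≃ₗᵢ⋆[ℂ] _).norm_map _
  have hC : 0 ≤ ‖TΦ - TΨ‖ / Real.sqrt mΦ :=
    div_nonneg (norm_nonneg _) (Real.sqrt_nonneg _)
  rw [gap]
  apply ContinuousLinearMap.opNorm_le_bound _ hC
  rintro ⟨x, hx⟩
  obtain ⟨f, rfl⟩ := hx
  set y : ℓ² := UΦ f - K.orthogonalProjectionOnto (UΦ f) with hy
  have hgoal : ((ContinuousLinearMap.id ℂ ℓ² - orthProj K hK).comp
      (LinearMap.range (UΦ : H →ₗ[ℂ] ℓ²)).subtypeL) ⟨UΦ f, ⟨f, rfl⟩⟩ = y := by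
    simp [orthProj, hy]
  refine (congrArg norm hgoal).trans_le ?_
  have hnx : ‖(⟨UΦ f, ⟨f, rfl⟩⟩ : (LinearMap.range (UΦ : H →ₗ[ℂ] ℓ²)))‖ = ‖UΦ f‖ := rfl
  change _ ≤ _ * ‖UΦ f‖
  -- y is orthogonal to K
  have hyK : y ∈ Kᗮ := Submodule.sub_starProjection_mem_orthogonal (K := K) (UΦ f)
  -- lower frame bound: √mΦ * ‖f‖ ≤ ‖UΦ f‖
  have hnormU : ‖UΦ f‖ ^ 2 = ∑' n, ‖(inner ℂ (φ n) f : ℂ)‖ ^ 2 := by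
    have h2 : (0:ℝ) < (2 : ENNReal).toReal := by norm_num
    have := lp.norm_rpow_eq_tsum h2 (UΦ f)
    simp only [ENNReal.toReal_ofNat] at this
    calc ‖UΦ f‖ ^ 2 = ‖UΦ f‖ ^ (2:ℝ) := by
          rw [← Real.rpow_natCast ‖UΦ f‖ 2]; norm_num
      _ = ∑' n, ‖UΦ f n‖ ^ (2:ℝ) := this
      _ = ∑' n, ‖(inner ℂ (φ n) f : ℂ)‖ ^ 2 := by
          congr 1; funext n
          rw [hUΦ f n, ← Real.rpow_natCast _ 2]; norm_num
  have hlow : Real.sqrt mΦ * ‖f‖ ≤ ‖UΦ f‖ := by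
    have h1 : mΦ * ‖f‖ ^ 2 ≤ ‖UΦ f‖ ^ 2 := by rw [hnormU]; exact (hfr f).1
    have h2 : Real.sqrt (mΦ * ‖f‖ ^ 2) ≤ Real.sqrt (‖UΦ f‖ ^ 2) := Real.sqrt_le_sqrt h1
    rwa [Real.sqrt_mul hm.le, Real.sqrt_sq (norm_nonneg _),
      Real.sqrt_sq (norm_nonneg _)] at h2
  -- key estimate ‖y‖^2 ≤ ‖y‖ * (‖UΦ - UΨ‖ * ‖f‖)
  have hinner : (inner ℂ y (UΦ f) : ℂ) = inner ℂ y y := by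
    have hPx : (K.orthogonalProjectionOnto (UΦ f) : ℓ²) ∈ K := (K.orthogonalProjectionOnto (UΦ f)).2
    have : (inner ℂ ((K.orthogonalProjectionOnto (UΦ f) : ℓ²)) y : ℂ) = 0 :=
      (Submodule.mem_orthogonal K y).mp hyK _ hPx
    have h0 : (inner ℂ y ((K.orthogonalProjectionOnto (UΦ f) : ℓ²)) : ℂ) = 0 := by
      rw [← inner_conj_symm, this, map_zero]
    calc (inner ℂ y (UΦ f) : ℂ) = inner ℂ y (y + (K.orthogonalProjectionOnto (UΦ f) : ℓ²)) := by
          congr 1; rw [hy]; abel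
      _ = inner ℂ y y + inner ℂ y ((K.orthogonalProjectionOnto (UΦ f) : ℓ²)) := inner_add_right _ _ _
      _ = inner ℂ y y := by rw [h0, add_zero]
  have hinner2 : (inner ℂ y (UΨ f) : ℂ) = 0 := by
    have hmem : UΨ f ∈ K := Submodule.le_topologicalClosure _ ⟨f, rfl⟩
    have : (inner ℂ (UΨ f) y : ℂ) = 0 := (Submodule.mem_orthogonal K y).mp hyK _ hmem
    rw [← inner_conj_symm, this, map_zero]
  have hkey : ‖y‖ ^ 2 ≤ ‖y‖ * (‖UΦ - UΨ‖ * ‖f‖) := by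
    have h3 : (inner ℂ y y : ℂ) = inner ℂ y ((UΦ - UΨ) f) := by
      rw [← hinner, ContinuousLinearMap.sub_apply, inner_sub_right, hinner2, sub_zero]
    calc ‖y‖ ^ 2 = ‖(inner ℂ y y : ℂ)‖ := by
          rw [inner_self_eq_norm_sq_to_K]
          simp
      _ = ‖(inner ℂ y ((UΦ - UΨ) f) : ℂ)‖ := by rw [h3]
      _ ≤ ‖y‖ * ‖(UΦ - UΨ) f‖ := norm_inner_le_norm _ _
      _ ≤ ‖y‖ * (‖UΦ - UΨ‖ * ‖f‖) := by
          gcongr; exact (UΦ - UΨ).le_opNorm f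
  have hy1 : ‖y‖ ≤ ‖UΦ - UΨ‖ * ‖f‖ := by
    rcases eq_or_lt_of_le (norm_nonneg y) with h | h
    · rw [← h]; exact mul_nonneg (norm_nonneg _) (norm_nonneg _)
    · have := hkey
      rw [sq] at this
      exact le_of_mul_le_mul_left this h
  -- conclude
  rw [hTnorm, div_mul_eq_mul_div, le_div_iff₀ (Real.sqrt_pos.mpr hm)]
  calc ‖y‖ * Real.sqrt mΦ ≤ (‖UΦ - UΨ‖ * ‖f‖) * Real.sqrt mΦ :=
        mul_le_mul_of_nonneg_right hy1 (Real.sqrt_nonneg _)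
    _ = ‖UΦ - UΨ‖ * (Real.sqrt mΦ * ‖f‖) := by ring
    _ ≤ ‖UΦ - UΨ‖ * ‖UΦ f‖ := mul_le_mul_of_nonneg_left hlow (norm_nonneg _)

end
end

section
/- Let Φ be a frame for H with lower bound m_Φ and let Ψ be a Bessel sequence with ‖T_Φ − T_Ψ‖ ≤ μ < √m_Φ. Then ‖P_{R(U_Φ)} − P_{R(U_Ψ)}‖ ≤ μ/(√m_Φ − μ), where P_X denotes orthogonal projection onto the closed range of the analysis operator. -/
open ContinuousLinearMap MeasureTheory
open scoped InnerProductSpace ComplexConjugate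

noncomputable section

variable {H : Type} [NormedAddCommGroup H] [InnerProductSpace ℂ H] [CompleteSpace H]

/-- If both "gaps" between closed subspaces `X` and `Y` are bounded by `c`, then the norm of
the difference of the orthogonal projections is bounded by `c`. -/
lemma proj_diff_norm_le {E : Type} [NormedAddCommGroup E] [InnerProductSpace ℂ E] [CompleteSpace E]
    (X Y : Submodule ℂ E) (hX : IsClosed (X : Set E)) (hY : IsClosed (Y : Set E))
    (c : ℝ) (hc : 0 ≤ c)
    (ha : ∀ x ∈ X, ‖x - orthProj Y hY x‖ ≤ c * ‖x‖)
    (hb : ∀ y ∈ Y, ‖y - orthProj X hX y‖ ≤ c * ‖y‖) :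
    ‖orthProj X hX - orthProj Y hY‖ ≤ c := by
  haveI := hX.completeSpace_coe
  haveI := hY.completeSpace_coe
  apply ContinuousLinearMap.opNorm_le_bound _ hc
  intro z
  set u : E := (X.orthogonalProjectionOnto z : E) with hu
  set v : E := z - u with hv
  have huX : u ∈ X := (X.orthogonalProjectionOnto z).2
  have hvX : v ∈ Xᗮ := Submodule.sub_starProjection_mem_orthogonal z
  have hzuv : z = u + v := by rw [hv]; abel
  set w : E := (Y.orthogonalProjectionOnto v : E) with hw
  have hwY : w ∈ Y := (Y.orthogonalProjectionOnto v).2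
  -- ‖w‖ ≤ c * ‖v‖
  have hwv : ‖w‖ ≤ c * ‖v‖ := by
    have h1 : ⟪v - w, w⟫_ℂ = 0 := Submodule.starProjection_inner_eq_zero v w hwY
    have h2 : ⟪(X.orthogonalProjectionOnto w : E), v⟫_ℂ = 0 :=
      (Submodule.mem_orthogonal X v).1 hvX _ (X.orthogonalProjectionOnto w).2
    have h2' : ⟪v, (X.orthogonalProjectionOnto w : E)⟫_ℂ = 0 := by
      rw [← inner_conj_symm, h2, map_zero]
    have key : (‖w‖ : ℝ) ^ 2 = RCLike.re (⟪v, w⟫_ℂ) := by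
      have h3 : ⟪v, w⟫_ℂ = ⟪w, w⟫_ℂ := by
        have := h1; rw [inner_sub_left, sub_eq_zero] at this; exact this
      rw [h3, inner_self_eq_norm_sq]
    have hle : RCLike.re (⟪v, w⟫_ℂ) ≤ c * ‖w‖ * ‖v‖ := by
      have e : ⟪v, w⟫_ℂ = ⟪v, w - X.orthogonalProjectionOnto w⟫_ℂ := by
        rw [inner_sub_right, h2', sub_zero]
      have hb' : ‖w - (X.orthogonalProjectionOnto w : E)‖ ≤ c * ‖w‖ := hb w hwY
      calc RCLike.re ⟪v, w⟫_ℂ ≤ ‖⟪v, w - (X.orthogonalProjectionOnto w : E)⟫_ℂ‖ := by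
            rw [e]; exact RCLike.re_le_norm _
        _ ≤ ‖v‖ * ‖w - (X.orthogonalProjectionOnto w : E)‖ := norm_inner_le_norm _ _
        _ ≤ ‖v‖ * (c * ‖w‖) := mul_le_mul_of_nonneg_left hb' (norm_nonneg v)
        _ = c * ‖w‖ * ‖v‖ := by ring
    rcases (norm_nonneg w).eq_or_lt with h0 | h0
    · rw [← h0]; positivity
    · nlinarith [norm_nonneg v]
  -- decomposition of (P - Q) z
  have hPz : orthProj X hX z = u := rfl
  have hQz : orthProj Y hY z = (Y.orthogonalProjectionOnto u : E) + w := by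
    show (Y.orthogonalProjectionOnto z : E) = _
    rw [hzuv, map_add]; rfl
  have hdec : (orthProj X hX - orthProj Y hY) z
      = (u - (Y.orthogonalProjectionOnto u : E)) + (-w) := by
    rw [ContinuousLinearMap.sub_apply, hPz, hQz]; abel
  have horth1 : ⟪u - (Y.orthogonalProjectionOnto u : E), -w⟫_ℂ = 0 := by
    rw [inner_neg_right, show ⟪u - (Y.orthogonalProjectionOnto u : E), w⟫_ℂ = 0 from Y.starProjection_inner_eq_zero u w hwY, neg_zero]
  have hns1 : ‖(u - (Y.orthogonalProjectionOnto u : E)) + (-w)‖ ^ 2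
      = ‖u - (Y.orthogonalProjectionOnto u : E)‖ ^ 2 + ‖w‖ ^ 2 := by
    have := norm_add_sq_eq_norm_sq_add_norm_sq_of_inner_eq_zero _ _ horth1
    simpa only [pow_two, norm_neg] using this
  have horth2 : ⟪u, v⟫_ℂ = 0 := (Submodule.mem_orthogonal X v).1 hvX u huX
  have hns2 : ‖z‖ ^ 2 = ‖u‖ ^ 2 + ‖v‖ ^ 2 := by
    rw [hzuv]
    have := norm_add_sq_eq_norm_sq_add_norm_sq_of_inner_eq_zero u v horth2
    simpa only [pow_two] using this
  have huq : ‖u - (Y.orthogonalProjectionOnto u : E)‖ ≤ c * ‖u‖ := ha u huX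
  have h5 : ‖(orthProj X hX - orthProj Y hY) z‖ ^ 2 ≤ (c * ‖z‖) ^ 2 := by
    rw [hdec, hns1]
    have e1 : ‖u - (Y.orthogonalProjectionOnto u : E)‖ ^ 2 ≤ (c * ‖u‖) ^ 2 :=
      pow_le_pow_left₀ (norm_nonneg _) huq 2
    have e2 : ‖w‖ ^ 2 ≤ (c * ‖v‖) ^ 2 := pow_le_pow_left₀ (norm_nonneg _) hwv 2
    calc ‖u - (Y.orthogonalProjectionOnto u : E)‖ ^ 2 + ‖w‖ ^ 2
        ≤ (c * ‖u‖) ^ 2 + (c * ‖v‖) ^ 2 := add_le_add e1 e2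
      _ = c ^ 2 * (‖u‖ ^ 2 + ‖v‖ ^ 2) := by ring
      _ = c ^ 2 * ‖z‖ ^ 2 := by rw [hns2]
      _ = (c * ‖z‖) ^ 2 := by ring
  exact le_of_pow_le_pow_left₀ two_ne_zero (by positivity) h5

lemma lp_norm_sq_eq_tsum (g : ℓ²) : ‖g‖ ^ 2 = ∑' n, ‖g n‖ ^ 2 := by
  have h := lp.norm_rpow_eq_tsum (p := 2) (by norm_num) g
  simp only [ENNReal.toReal_ofNat] at h
  have h2 : ∀ x : ℝ, x ^ (2 : ℝ) = x ^ (2 : ℕ) := fun x => by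
    rw [show ((2:ℝ)) = ((2:ℕ):ℝ) by norm_num, Real.rpow_natCast]
  rw [h2] at h
  simp only [h2] at h
  exact h

set_option maxHeartbeats 1000000 in
theorem stmt4
    (φ ψ : ℕ → H) (mΦ MΦ MΨ μ : ℝ)
    (UΦ UΨ : H →L[ℂ] ℓ²) (TΦ TΨ : ℓ² →L[ℂ] H)
    (hUΦ : IsAnalysis φ UΦ) (hUΨ : IsAnalysis ψ UΨ)
    (hTΦ : TΦ = adjoint UΦ) (hTΨ : TΨ = adjoint UΨ)
    (hΦ : IsFrame φ mΦ MΦ) (hΨ : IsBessel ψ MΨ)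
    (hμ : μ < Real.sqrt mΦ) (hper : ‖TΦ - TΨ‖ ≤ μ) :
    ‖orthProj ((LinearMap.range (UΦ : H →ₗ[ℂ] ℓ²)).topologicalClosure)
        (Submodule.isClosed_topologicalClosure _) -
      orthProj ((LinearMap.range (UΨ : H →ₗ[ℂ] ℓ²)).topologicalClosure)
        (Submodule.isClosed_topologicalClosure _)‖
      ≤ μ / (Real.sqrt mΦ - μ) := by
  set s := Real.sqrt mΦ with hsdef
  have hmΦ : 0 < mΦ := hΦ.1
  have hs0 : 0 < s := Real.sqrt_pos.mpr hmΦ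
  have hμ0 : 0 ≤ μ := le_trans (norm_nonneg _) hper
  have hsμ : 0 < s - μ := sub_pos.mpr hμ
  set c := μ / (s - μ) with hcdef
  have hc0 : 0 ≤ c := div_nonneg hμ0 hsμ.le
  have hcμ : c * (s - μ) = μ := div_mul_cancel₀ μ hsμ.ne'
  -- lower bound for UΦ
  have hlowΦ : ∀ f : H, s * ‖f‖ ≤ ‖UΦ f‖ := by
    intro f
    have h1 : mΦ * ‖f‖ ^ 2 ≤ ‖UΦ f‖ ^ 2 := by
      rw [lp_norm_sq_eq_tsum]
      have := (hΦ.2.2 f).1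
      simpa only [hUΦ f] using this
    have h2 : (s * ‖f‖) ^ 2 ≤ ‖UΦ f‖ ^ 2 := by
      rw [mul_pow, hsdef, Real.sq_sqrt hmΦ.le]; exact h1
    exact le_of_pow_le_pow_left₀ two_ne_zero (norm_nonneg _) h2
  -- operator norm bound
  have hop : ‖UΦ - UΨ‖ ≤ μ := by
    have e : UΦ - UΨ = adjoint (TΦ - TΨ) := by
      rw [hTΦ, hTΨ, map_sub, adjoint_adjoint, adjoint_adjoint]
    rw [e, (ContinuousLinearMap.adjoint : (ℓ² →L[ℂ] H) ≃ₗᵢ⋆[ℂ] _).norm_map (TΦ - TΨ)]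
    exact hper
  have hdiffΦΨ : ∀ f : H, ‖UΦ f - UΨ f‖ ≤ μ * ‖f‖ := by
    intro f
    calc ‖UΦ f - UΨ f‖ = ‖(UΦ - UΨ) f‖ := by rw [ContinuousLinearMap.sub_apply]
      _ ≤ ‖UΦ - UΨ‖ * ‖f‖ := le_opNorm _ _
      _ ≤ μ * ‖f‖ := mul_le_mul_of_nonneg_right hop (norm_nonneg f)
  -- lower bound for UΨ
  have hlowΨ : ∀ f : H, (s - μ) * ‖f‖ ≤ ‖UΨ f‖ := by
    intro f
    have h1 := hdiffΦΨ f
    have h2 := hlowΦ f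
    have h3 : ‖UΦ f‖ - ‖UΨ f‖ ≤ ‖UΦ f - UΨ f‖ := norm_sub_norm_le _ _
    rw [sub_mul]; linarith
  have hlowΦ' : ∀ f : H, (s - μ) * ‖f‖ ≤ ‖UΦ f‖ := by
    intro f
    refine le_trans ?_ (hlowΦ f)
    have := norm_nonneg f
    nlinarith
  -- generic gap bound
  have key : ∀ U V : H →L[ℂ] ℓ²,
      (∀ f : H, (s - μ) * ‖f‖ ≤ ‖V f‖) → (∀ f : H, ‖U f - V f‖ ≤ μ * ‖f‖) →
      ∀ x ∈ (LinearMap.range (V : H →ₗ[ℂ] ℓ²)).topologicalClosure,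
        ‖x - orthProj ((LinearMap.range (U : H →ₗ[ℂ] ℓ²)).topologicalClosure)
            (Submodule.isClosed_topologicalClosure _) x‖ ≤ c * ‖x‖ := by
    intro U V hV hUV
    set X := (LinearMap.range (U : H →ₗ[ℂ] ℓ²)).topologicalClosure with hX
    have hXc : IsClosed (X : Set ℓ²) := Submodule.isClosed_topologicalClosure _
    haveI := hXc.completeSpace_coe
    set P := orthProj X hXc with hP
    have hset : IsClosed {x : ℓ² | ‖x - P x‖ ≤ c * ‖x‖} := by
      apply isClosed_le
      · exact (continuous_id.sub P.continuous).norm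
      · exact continuous_const.mul continuous_norm
    have hsub : (LinearMap.range (V : H →ₗ[ℂ] ℓ²) : Set ℓ²) ⊆ {x : ℓ² | ‖x - P x‖ ≤ c * ‖x‖} := by
      rintro x ⟨f, rfl⟩
      have hmemX : U f ∈ X := Submodule.le_topologicalClosure _ ⟨f, rfl⟩
      have hmin : ‖V f - P (V f)‖ ≤ ‖V f - U f‖ := by
        rw [show P (V f) = (X.orthogonalProjectionOnto (V f) : ℓ²) from rfl,
          show ‖V f - (X.orthogonalProjectionOnto (V f) : ℓ²)‖ = ⨅ x : X, ‖V f - x‖ from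
              Submodule.starProjection_minimal (V f)]
        exact ciInf_le ⟨0, Set.forall_mem_range.mpr fun _ => norm_nonneg _⟩
          (⟨U f, hmemX⟩ : X)
      show ‖V f - P (V f)‖ ≤ c * ‖V f‖
      calc ‖V f - P (V f)‖ ≤ ‖V f - U f‖ := hmin
        _ = ‖U f - V f‖ := norm_sub_rev _ _
        _ ≤ μ * ‖f‖ := hUV f
        _ = c * (s - μ) * ‖f‖ := by rw [hcμ]
        _ = c * ((s - μ) * ‖f‖) := by ring
        _ ≤ c * ‖V f‖ := mul_le_mul_of_nonneg_left (hV f) hc0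
    intro x hx
    have hx' : x ∈ closure (LinearMap.range (V : H →ₗ[ℂ] ℓ²) : Set ℓ²) := by
      rw [← SetLike.mem_coe, Submodule.topologicalClosure_coe] at hx
      exact hx
    exact closure_minimal hsub hset hx'
  refine proj_diff_norm_le _ _ _ _ c hc0 ?_ ?_
  · exact key UΨ UΦ hlowΦ' (fun f => by rw [norm_sub_rev]; exact hdiffΦΨ f)
  · exact key UΦ UΨ hlowΨ hdiffΦΨ

end
end

section
/- With the notation of the previous setting (Φ a frame, Ψ a μ-perturbation with μ < √m_Φ, Θ_ba = P_{ker T_Ψ} U_{Φ_Θ^{ad}(A₁)}), the approximately dual Ψ_{Θ_ba}^{ad}(A₂) is a best approximation of Φ_Θ^{ad}(A₁) among approximately duals of Ψ: for every Λ ∈ B(H, ℓ²) with T_Ψ Λ = 0, ‖T_{Ψ_{Θ_ba}^{ad}(A₂)} − T_{Φ_Θ^{ad}(A₁)}‖ ≤ ‖T_{Ψ_Λ^{ad}(A₂)} − T_{Φ_Θ^{ad}(A₁)}‖. -/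
open ContinuousLinearMap MeasureTheory
open scoped InnerProductSpace ComplexConjugate

noncomputable section

variable {H : Type} [NormedAddCommGroup H] [InnerProductSpace ℂ H] [CompleteSpace H]

set_option maxHeartbeats 1000000 in
theorem stmt14
    (φ ψ : ℕ → H) (mΦ MΦ MΨ μ : ℝ)
    (UΦ UΨ : H →L[ℂ] ℓ²) (TΦ TΨ : ℓ² →L[ℂ] H)
    (SΦ SΦinv SΨ SΨinv A1 A2 : H →L[ℂ] H) (Θ : H →L[ℂ] ℓ²)
    (hUΦ : IsAnalysis φ UΦ) (hUΨ : IsAnalysis ψ UΨ)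
    (hTΦ : TΦ = adjoint UΦ) (hTΨ : TΨ = adjoint UΨ)
    (hSΦ : SΦ = TΦ ∘L UΦ) (hSΨ : SΨ = TΨ ∘L UΨ)
    (hSΦ1 : SΦ ∘L SΦinv = ContinuousLinearMap.id ℂ H)
    (hSΦ2 : SΦinv ∘L SΦ = ContinuousLinearMap.id ℂ H)
    (hSΨ1 : SΨ ∘L SΨinv = ContinuousLinearMap.id ℂ H)
    (hSΨ2 : SΨinv ∘L SΨ = ContinuousLinearMap.id ℂ H)
    (hΦ : IsFrame φ mΦ MΦ) (hΨ : IsBessel ψ MΨ)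
    (hμ : μ < Real.sqrt mΦ) (hper : ‖TΦ - TΨ‖ ≤ μ)
    (hA1 : ‖ContinuousLinearMap.id ℂ H - A1‖ < 1)
    (hA2 : ‖ContinuousLinearMap.id ℂ H - A2‖ < 1)
    (hΘ : TΦ ∘L Θ = 0)
    (DΦ : ℓ² →L[ℂ] H) (hDΦ : DΦ = adjoint A1 ∘L (SΦinv ∘L TΦ) + adjoint Θ)
    (Θba : H →L[ℂ] ℓ²)
    (hΘba : Θba = orthProj (LinearMap.ker (TΨ : ℓ² →ₗ[ℂ] H)) (ContinuousLinearMap.isClosed_ker TΨ) ∘L adjoint DΦ) :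
    ∀ Λ : H →L[ℂ] ℓ², TΨ ∘L Λ = 0 →
      ‖(adjoint A2 ∘L (SΨinv ∘L TΨ) + adjoint Θba) - DΦ‖ ≤
        ‖(adjoint A2 ∘L (SΨinv ∘L TΨ) + adjoint Λ) - DΦ‖ := by
  intro Λ hΛ
  set K : Submodule ℂ ℓ² := LinearMap.ker (TΨ : ℓ² →ₗ[ℂ] H) with hKdef
  have hK : IsClosed (K : Set ℓ²) := ContinuousLinearMap.isClosed_ker TΨ
  haveI : CompleteSpace K := hK.completeSpace_coe
  set P : ℓ² →L[ℂ] ℓ² := orthProj K hK with hPdef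
  have hPeq : P = K.subtypeL ∘L K.orthogonalProjectionOnto := rfl
  -- self-adjointness of P
  have hPsa : adjoint P = P := by
    have := (isSelfAdjoint_starProjection K).adjoint_eq; exact this
  -- TΨ ∘ P = 0
  have hTP : TΨ ∘L P = 0 := by
    ext x
    have : P x ∈ K := by
      rw [hPeq]; exact SetLike.coe_mem _
    simpa [hKdef] using this
  -- Λ* ∘ P = Λ*
  have hΛP : adjoint Λ ∘L P = adjoint Λ := by
    have hPΛ : P ∘L Λ = Λ := by
      ext x
      have hx : Λ x ∈ K := by simpa [hKdef] using congrArg (fun T => T x) hΛ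
      have := Submodule.orthogonalProjectionOnto_mem_subspace_eq_self (K := K) ⟨Λ x, hx⟩
      simp only [hPeq, ContinuousLinearMap.coe_comp', Function.comp_apply]
      rw [this]
      rfl
    calc adjoint Λ ∘L P = adjoint Λ ∘L adjoint P := by rw [hPsa]
      _ = adjoint (P ∘L Λ) := (ContinuousLinearMap.adjoint_comp P Λ).symm
      _ = adjoint Λ := by rw [hPΛ]
  -- Θba* = DΦ ∘ P
  have hΘbaAdj : adjoint Θba = DΦ ∘L P := by
    rw [hΘba, ContinuousLinearMap.adjoint_comp, ContinuousLinearMap.adjoint_adjoint, hPsa]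
  -- key factorization
  have key : (adjoint A2 ∘L (SΨinv ∘L TΨ) + adjoint Θba) - DΦ
      = ((adjoint A2 ∘L (SΨinv ∘L TΨ) + adjoint Λ) - DΦ) ∘L
        (ContinuousLinearMap.id ℂ ℓ² - P) := by
    have hBP : (adjoint A2 ∘L (SΨinv ∘L TΨ)) ∘L P = 0 := by
      rw [ContinuousLinearMap.comp_assoc, ContinuousLinearMap.comp_assoc, hTP]
      simp
    rw [ContinuousLinearMap.sub_comp, ContinuousLinearMap.add_comp,
      ContinuousLinearMap.comp_sub, ContinuousLinearMap.comp_sub,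
      ContinuousLinearMap.comp_sub, ContinuousLinearMap.comp_id,
      ContinuousLinearMap.comp_id, ContinuousLinearMap.comp_id,
      hBP, hΛP, hΘbaAdj]
    abel
  -- ‖Id - P‖ ≤ 1
  have hIP : ‖ContinuousLinearMap.id ℂ ℓ² - P‖ ≤ 1 := by
    refine ContinuousLinearMap.opNorm_le_bound _ zero_le_one fun x => ?_
    have hx : (ContinuousLinearMap.id ℂ ℓ² - P) x = x - P x := rfl
    have h2 : x - (K.subtypeL ∘L K.orthogonalProjectionOnto) x
        = (Kᗮ.orthogonalProjectionOnto x : ℓ²) := by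
      rw [Submodule.orthogonalProjectionOnto_orthogonal]; rfl
    rw [hx, hPeq, h2, one_mul]
    calc ‖(Kᗮ.orthogonalProjectionOnto x : ℓ²)‖ = ‖Kᗮ.orthogonalProjectionOnto x‖ := rfl
      _ ≤ ‖Kᗮ.orthogonalProjectionOnto‖ * ‖x‖ := (Kᗮ.orthogonalProjectionOnto).le_opNorm x
      _ ≤ 1 * ‖x‖ := by
          exact mul_le_mul_of_nonneg_right (Submodule.orthogonalProjectionOnto_norm_le _) (norm_nonneg x)
      _ = ‖x‖ := one_mul _
  calc ‖(adjoint A2 ∘L (SΨinv ∘L TΨ) + adjoint Θba) - DΦ‖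
      = ‖((adjoint A2 ∘L (SΨinv ∘L TΨ) + adjoint Λ) - DΦ) ∘L
          (ContinuousLinearMap.id ℂ ℓ² - P)‖ := by rw [key]
    _ ≤ ‖(adjoint A2 ∘L (SΨinv ∘L TΨ) + adjoint Λ) - DΦ‖ *
          ‖ContinuousLinearMap.id ℂ ℓ² - P‖ := ContinuousLinearMap.opNorm_comp_le _ _
    _ ≤ ‖(adjoint A2 ∘L (SΨinv ∘L TΨ) + adjoint Λ) - DΦ‖ * 1 := by
          exact mul_le_mul_of_nonneg_left hIP (norm_nonneg _)
    _ = _ := mul_one _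


end
end
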